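/- For any vectors μ_1, …, μ_T, μ ∈ ℝ^m, the following identity holds: ∑_{t=1}^T g_t^⊤(μ_t − μ) = ∑_{t=1}^T a_t z_t^⊤(μ_t − μ) − ∑_{s=1}^T ∑_{t=s+1}^T b_{t,s} g_s^⊤(μ_t − μ_{t−1}), where b_{t,s} := ∑_{j=t}^T a_j λ_{j−s}. -/

import Mathlib

open Finset

/-- Triangle sum reindexing: sum over pairs `(k, i)` with `k + i < N`. -/
private lemma tri_sum (f : ℕ → ℕ → ℝ) (N : ℕ) :
    ∑ k ∈ range N, ∑ i ∈ range (N - k), f k i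
      = ∑ n ∈ range N, ∑ k ∈ range (n + 1), f k (n - k) := by
  induction N with
  | zero => simp
  | succ N ih =>
    rw [sum_range_succ (fun n => ∑ k ∈ range (n + 1), f k (n - k)) N]
    have h1 : ∀ k ∈ range N, ∑ i ∈ range (N + 1 - k), f k i
        = ∑ i ∈ range (N - k), f k i + f k (N - k) := by
      intro k hk
      rw [mem_range] at hk
      have h : N + 1 - k = (N - k) + 1 := by omega
      rw [h, sum_range_succ]
    rw [sum_range_succ (fun k => ∑ i ∈ range (N + 1 - k), f k i) N,
      sum_congr rfl h1, sum_add_distrib, ih]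
    have h2 : N + 1 - N = 1 := by omega
    rw [h2, sum_range_one]
    rw [sum_range_succ (fun k => f k (N - k)) N, Nat.sub_self]
    ring

/-- Abel summation / summation by parts on `Icc s T`. -/
private lemma abel_sum (s T : ℕ) (hsT : s ≤ T) (B P c : ℕ → ℝ)
    (hc : ∀ t, s ≤ t → t ≤ T → c t = B t - B (t + 1))
    (htop : B (T + 1) = 0) :
    ∑ t ∈ Icc s T, c t * P t
      = B s * P s + ∑ t ∈ Icc (s + 1) T, B t * (P t - P (t - 1)) := by
  have h1 : ∑ t ∈ Icc s T, c t * P t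
      = ∑ t ∈ Icc s T, B t * P t - ∑ t ∈ Icc s T, B (t + 1) * P t := by
    rw [← sum_sub_distrib]
    refine sum_congr rfl fun t ht => ?_
    rw [mem_Icc] at ht
    rw [hc t ht.1 ht.2]; ring
  have h2 : ∑ t ∈ Icc s T, B (t + 1) * P t
      = ∑ t ∈ Icc (s + 1) (T + 1), B t * P (t - 1) := by
    refine sum_nbij' (fun t => t + 1) (fun t => t - 1) ?_ ?_ ?_ ?_ ?_ <;>
      intro t ht <;> simp only [mem_Icc] at * <;> first
        | omega
        | simp
  have h3 : ∑ t ∈ Icc (s + 1) (T + 1), B t * P (t - 1)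
      = ∑ t ∈ Icc (s + 1) T, B t * P (t - 1) + B (T + 1) * P T := by
    rw [sum_Icc_succ_top (by omega) (fun t => B t * P (t - 1))]
    simp
  have h4 : ∑ t ∈ Icc s T, B t * P t
      = B s * P s + ∑ t ∈ Icc (s + 1) T, B t * P t := by
    rw [Icc_eq_cons_Ioc hsT, sum_cons, ← Finset.Icc_add_one_left_eq_Ioc]
  have h5 : ∑ t ∈ Icc (s + 1) T, B t * (P t - P (t - 1))
      = ∑ t ∈ Icc (s + 1) T, B t * P t - ∑ t ∈ Icc (s + 1) T, B t * P (t - 1) := by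
    rw [← sum_sub_distrib]
    exact sum_congr rfl fun t _ => by ring
  rw [h1, h2, h3, h4, h5, htop]; ring

/-- The regret-decomposition identity for Convolutional Mirror Descent:
`∑_{t=1}^T g_t^⊤(μ_t − μ) = ∑_{t=1}^T a_t z_t^⊤(μ_t − μ)
 − ∑_{s=1}^T ∑_{t=s+1}^T b_{t,s} g_s^⊤(μ_t − μ_{t−1})`,
where `b_{t,s} = ∑_{j=t}^T a_j λ_{j−s}`. -/
theorem cmd_regret_decomposition (m T : ℕ) (hT : 1 ≤ T)
    (g : ℕ → Fin m → ℝ) (lam q : ℕ → ℝ) (hlam0 : lam 0 ≠ 0)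
    (hq : ∀ k < T, ∑ i ∈ Finset.range (k + 1), lam i * q (k - i) =
      if k = 0 then 1 else 0)
    (z : ℕ → Fin m → ℝ)
    (hz : ∀ t ∈ Finset.Icc 1 T, z t = ∑ s ∈ Finset.Icc 1 t, lam (t - s) • g s)
    (a : ℕ → ℝ)
    (ha : ∀ t ∈ Finset.Icc 1 T, a t = ∑ i ∈ Finset.range (T - t + 1), q i)
    (μ : ℕ → Fin m → ℝ) (μbar : Fin m → ℝ) :
    ∑ t ∈ Finset.Icc 1 T, (∑ i, g t i * (μ t i - μbar i)) =
      ∑ t ∈ Finset.Icc 1 T, a t * (∑ i, z t i * (μ t i - μbar i))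
        - ∑ s ∈ Finset.Icc 1 T, ∑ t ∈ Finset.Icc (s + 1) T,
            (∑ j ∈ Finset.Icc t T, a j * lam (j - s))
              * (∑ i, g s i * (μ t i - μ (t - 1) i)) := by
  -- diagonal sums of `B` are 1
  have hBdiag : ∀ s, 1 ≤ s → s ≤ T →
      (∑ j ∈ Icc s T, a j * lam (j - s)) = 1 := by
    intro s hs1 hsT
    have hre : ∑ j ∈ Icc s T, a j * lam (j - s)
        = ∑ k ∈ range (T + 1 - s), a (s + k) * lam k := by
      refine sum_nbij' (fun j => j - s) (fun k => s + k) ?_ ?_ ?_ ?_ ?_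
      · intro j hj; simp only [mem_Icc, mem_range] at *; omega
      · intro k hk; simp only [mem_Icc, mem_range] at *; omega
      · intro j hj; simp only [mem_Icc] at hj; show s + (j - s) = j; omega
      · intro k hk; simp only [mem_range] at hk; show s + k - s = k; omega
      · intro j hj; simp only [mem_Icc] at hj
        have h1 : s + (j - s) = j := by omega
        rw [h1]
    rw [hre]
    have hav : ∀ k ∈ range (T + 1 - s),
        a (s + k) * lam k = ∑ i ∈ range (T + 1 - s - k), lam k * q i := by
      intro k hk
      rw [mem_range] at hk
      rw [ha (s + k) (by rw [mem_Icc]; omega)]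
      have h : T - (s + k) + 1 = T + 1 - s - k := by omega
      rw [h, sum_mul]
      exact sum_congr rfl fun i _ => by ring
    rw [sum_congr rfl hav, tri_sum (fun k i => lam k * q i) (T + 1 - s)]
    have hone : ∀ n ∈ range (T + 1 - s),
        (∑ k ∈ range (n + 1), lam k * q (n - k)) = if n = 0 then 1 else 0 := by
      intro n hn
      rw [mem_range] at hn
      exact hq n (by omega)
    rw [sum_congr rfl hone]
    rw [Finset.sum_ite_eq' (range (T + 1 - s)) 0 (fun _ => (1 : ℝ))]
    simp [Nat.lt_of_lt_of_le (by omega : 0 < 1) (by omega : 1 ≤ T + 1 - s)]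
  -- rewrite inner product with z
  have hz' : ∀ t ∈ Icc 1 T, (∑ i, z t i * (μ t i - μbar i))
      = ∑ s ∈ Icc 1 t, lam (t - s) * (∑ i, g s i * (μ t i - μbar i)) := by
    intro t ht
    rw [hz t ht]
    simp only [Finset.sum_apply, Pi.smul_apply, smul_eq_mul, sum_mul]
    rw [Finset.sum_comm]
    refine sum_congr rfl fun s _ => ?_
    rw [mul_sum]
    exact sum_congr rfl fun i _ => by ring
  have e1 : ∑ t ∈ Icc 1 T, a t * (∑ i, z t i * (μ t i - μbar i))
      = ∑ t ∈ Icc 1 T, ∑ s ∈ Icc 1 t,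
          (a t * lam (t - s)) * (∑ i, g s i * (μ t i - μbar i)) := by
    refine sum_congr rfl fun t ht => ?_
    rw [hz' t ht, mul_sum]
    exact sum_congr rfl fun s _ => by ring
  have e2 : ∑ t ∈ Icc 1 T, ∑ s ∈ Icc 1 t,
        (a t * lam (t - s)) * (∑ i, g s i * (μ t i - μbar i))
      = ∑ s ∈ Icc 1 T, ∑ t ∈ Icc s T,
          (a t * lam (t - s)) * (∑ i, g s i * (μ t i - μbar i)) := by
    refine sum_comm' fun t s => ?_
    simp only [mem_Icc]
    omega
  -- per-s Abel summation
  have e3 : ∀ s ∈ Icc 1 T,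
      ∑ t ∈ Icc s T, (a t * lam (t - s)) * (∑ i, g s i * (μ t i - μbar i))
        = (∑ i, g s i * (μ s i - μbar i))
          + ∑ t ∈ Icc (s + 1) T, (∑ j ∈ Icc t T, a j * lam (j - s))
              * ((∑ i, g s i * (μ t i - μbar i))
                 - (∑ i, g s i * (μ (t - 1) i - μbar i))) := by
    intro s hs
    rw [mem_Icc] at hs
    have habel := abel_sum s T hs.2
      (fun t => ∑ j ∈ Icc t T, a j * lam (j - s))
      (fun t => ∑ i, g s i * (μ t i - μbar i))
      (fun t => a t * lam (t - s))
      (by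
        intro t hst htT
        have : ∑ j ∈ Icc t T, a j * lam (j - s)
            = a t * lam (t - s) + ∑ j ∈ Icc (t + 1) T, a j * lam (j - s) := by
          rw [Icc_eq_cons_Ioc htT, sum_cons, ← Finset.Icc_add_one_left_eq_Ioc]
        rw [this]; ring)
      (by simp [Finset.Icc_eq_empty (by omega : ¬ T + 1 ≤ T)])
    rw [habel, hBdiag s hs.1 hs.2, one_mul]
  -- difference of inner products
  have hQ : ∀ s ∈ Icc 1 T, ∀ t ∈ Icc (s + 1) T,
      (∑ i, g s i * (μ t i - μ (t - 1) i))
        = (∑ i, g s i * (μ t i - μbar i))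
          - (∑ i, g s i * (μ (t - 1) i - μbar i)) := by
    intro s _ t _
    rw [← sum_sub_distrib]
    exact Finset.sum_congr rfl fun i _ => by ring
  have e4 : ∑ s ∈ Icc 1 T, ∑ t ∈ Icc (s + 1) T,
        (∑ j ∈ Icc t T, a j * lam (j - s))
          * (∑ i, g s i * (μ t i - μ (t - 1) i))
      = ∑ s ∈ Icc 1 T, ∑ t ∈ Icc (s + 1) T,
          (∑ j ∈ Icc t T, a j * lam (j - s))
            * ((∑ i, g s i * (μ t i - μbar i))
               - (∑ i, g s i * (μ (t - 1) i - μbar i))) := by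
    refine sum_congr rfl fun s hs => sum_congr rfl fun t ht => ?_
    rw [hQ s hs t ht]
  rw [e1, e2, sum_congr rfl e3, e4, sum_add_distrib]
  ring
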